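/- Let f : ℝ → [0,∞) be nonincreasing and let λ > 0 be such that M := ∫_ℝ f(t)e^{λt} dt < ∞. Then for every s ∈ ℝ, f(s) ≤ (λe^λ/(e^λ − 1)) · M · e^{−λs}. -/

import Mathlib

open MeasureTheory Real Set Filter

/-- a nonnegative nonincreasing function whose bilateral Laplace integral
`M = ∫ f(t) e^{λt} dt` converges for some `λ > 0` satisfies the pointwise bound
`f(s) ≤ (λ e^λ/(e^λ - 1)) ⬝ M ⬝ e^{-λ s}`. -/
theorem decay_estimate_from_laplace
    (f : ℝ → ℝ) (hf_nonneg : ∀ s, 0 ≤ f s) (hf_anti : Antitone f)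
    (l : ℝ) (hl : 0 < l)
    (hint : Integrable fun t => f t * Real.exp (l * t)) :
    ∀ s : ℝ, f s ≤ (l * Real.exp l / (Real.exp l - 1))
        * (∫ t, f t * Real.exp (l * t)) * Real.exp (-l * s) := by
  intro s
  set M := ∫ t, f t * Real.exp (l * t) with hM
  have hexp_int : IntegrableOn (fun t => Real.exp (l * t)) (Set.Ioc (s - 1) s) := by
    apply Continuous.integrableOn_Ioc
    exact Real.continuous_exp.comp (continuous_const.mul continuous_id)
  -- lower bound: ∫ over Ioc (s-1) s of f s * exp(l t) ≤ M
  have h1 : ∫ t in Set.Ioc (s - 1) s, f s * Real.exp (l * t)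
      ≤ ∫ t in Set.Ioc (s - 1) s, f t * Real.exp (l * t) := by
    apply setIntegral_mono_on (hexp_int.const_mul (f s)) (hint.integrableOn)
      measurableSet_Ioc
    intro t ht
    exact mul_le_mul_of_nonneg_right (hf_anti ht.2) (Real.exp_pos _).le
  have h2 : ∫ t in Set.Ioc (s - 1) s, f t * Real.exp (l * t) ≤ M := by
    apply setIntegral_le_integral hint
    filter_upwards with t
    exact mul_nonneg (hf_nonneg t) (Real.exp_pos _).le
  -- compute the exponential integral
  have hcomp : ∫ t in Set.Ioc (s - 1) s, Real.exp (l * t)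
      = (Real.exp (l * s) - Real.exp (l * (s - 1))) / l := by
    rw [← intervalIntegral.integral_of_le (by linarith : s - 1 ≤ s)]
    rw [intervalIntegral.integral_comp_mul_left (fun x => Real.exp x) hl.ne']
    rw [integral_exp]
    rw [smul_eq_mul]
    ring
  have hval : ∫ t in Set.Ioc (s - 1) s, f s * Real.exp (l * t)
      = f s * ((Real.exp (l * s) - Real.exp (l * (s - 1))) / l) := by
    rw [MeasureTheory.integral_const_mul, hcomp]
  have key : f s * ((Real.exp (l * s) - Real.exp (l * (s - 1))) / l) ≤ M := by
    rw [← hval]; exact h1.trans h2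
  -- algebra
  have hpos : 0 < Real.exp (l * s) - Real.exp (l * (s - 1)) := by
    have : l * (s - 1) < l * s := by nlinarith
    linarith [Real.exp_lt_exp.2 this]
  have hfs : f s ≤ l / (Real.exp (l * s) - Real.exp (l * (s - 1))) * M := by
    rw [div_mul_eq_mul_div, le_div_iff₀ hpos]
    calc f s * (Real.exp (l * s) - Real.exp (l * (s - 1)))
        = (f s * ((Real.exp (l * s) - Real.exp (l * (s - 1))) / l)) * l := by
          field_simp
      _ ≤ M * l := mul_le_mul_of_nonneg_right key hl.le
      _ = l * M := mul_comm _ _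
  refine hfs.trans (le_of_eq ?_)
  have he : (0:ℝ) < Real.exp l - 1 := by
    have : Real.exp 0 < Real.exp l := Real.exp_lt_exp.2 hl
    simpa using this
  rw [show l * (s - 1) = l * s - l by ring, Real.exp_sub,
    show -l * s = -(l * s) by ring, Real.exp_neg]
  have h3 : Real.exp (l * s) - Real.exp (l * s) / Real.exp l
      = Real.exp (l * s) * (Real.exp l - 1) / Real.exp l := by
    field_simp
  rw [h3, div_div_eq_mul_div]
  rw [eq_comm]
  field_simp [he.ne']
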